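/- Let Λ ⊂ ℝⁿ be a lattice, A a positive semidefinite n×n matrix with Λ contained in the range of A, and t ≥ 1 a real number. Then ρ_{A/t²}(Λ \ {0}) ≤ ρ_A(Λ \ {0})^{t²}, where ρ_X(T) = Σ_{y ∈ T ∩ ran(X)} exp(−π yᵀ X⁺ y) and X⁺ is the Moore–Penrose pseudoinverse. -/

import Mathlib

open Real Matrix

/-- `Ap` is the Moore–Penrose pseudoinverse of `A`. -/
def IsMoorePenrose {n : ℕ} (A Ap : Matrix (Fin n) (Fin n) ℝ) : Prop :=
  A * Ap * A = A ∧ Ap * A * Ap = Ap ∧ (A * Ap)ᵀ = A * Ap ∧ (Ap * A)ᵀ = Ap * A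

/-- The point of the `d`-dimensional lattice with basis matrix `C` given by `z : ℤᵈ`. -/
noncomputable def latPt {n d : ℕ} (C : Matrix (Fin n) (Fin d) ℝ) (z : Fin d → ℤ) : Fin n → ℝ :=
  C.mulVec fun i => (z i : ℝ)

lemma mp_unique {n : ℕ} {M B C : Matrix (Fin n) (Fin n) ℝ}
    (hB : IsMoorePenrose M B) (hC : IsMoorePenrose M C) : B = C := by
  obtain ⟨hB1, hB2, hB3, hB4⟩ := hB
  obtain ⟨hC1, hC2, hC3, hC4⟩ := hC
  have h1 : M * B = M * C := by
    calc M * B = (M * C * M) * B := by rw [hC1]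
    _ = ((M * B) * (M * C))ᵀ := by rw [transpose_mul, hC3, hB3]; noncomm_ring
    _ = ((M * B * M) * C)ᵀ := by noncomm_ring
    _ = (M * C)ᵀ := by rw [hB1]
    _ = M * C := hC3
  have h2 : B * M = C * M := by
    calc B * M = B * (M * C * M) := by rw [hC1]
    _ = ((C * M) * (B * M))ᵀ := by rw [transpose_mul, hB4, hC4]; noncomm_ring
    _ = (C * (M * B * M))ᵀ := by noncomm_ring
    _ = (C * M)ᵀ := by rw [hB1]
    _ = C * M := hC4
  calc B = B * M * B := hB2.symm
  _ = B * (M * C) := by rw [← h1]; noncomm_ring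
  _ = (B * M) * C := by noncomm_ring
  _ = C * M * C := by rw [h2]
  _ = C := hC2

lemma mp_smul {n : ℕ} {A Ap : Matrix (Fin n) (Fin n) ℝ} (h : IsMoorePenrose A Ap)
    {s : ℝ} (hs : s ≠ 0) : IsMoorePenrose (s⁻¹ • A) (s • Ap) := by
  obtain ⟨h1, h2, h3, h4⟩ := h
  have e1 : (s⁻¹ • A) * (s • Ap) = A * Ap := by
    rw [Matrix.smul_mul, Matrix.mul_smul, smul_smul, inv_mul_cancel₀ hs, one_smul]
  have e2 : (s • Ap) * (s⁻¹ • A) = Ap * A := by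
    rw [Matrix.smul_mul, Matrix.mul_smul, smul_smul, mul_inv_cancel₀ hs, one_smul]
  refine ⟨?_, ?_, ?_, ?_⟩
  · rw [e1, Matrix.mul_smul, h1]
  · rw [e2, Matrix.mul_smul, h2]
  · rw [e1]; exact h3
  · rw [e2]; exact h4

lemma quad_eq {n : ℕ} {A Ap : Matrix (Fin n) (Fin n) ℝ} (hA : A.PosSemidef)
    (h1 : A * Ap * A = A) (u : Fin n → ℝ) :
    (A *ᵥ u) ⬝ᵥ Ap *ᵥ (A *ᵥ u) = u ⬝ᵥ A *ᵥ u := by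
  have hAt : Aᵀ = A := hA.1
  calc (A *ᵥ u) ⬝ᵥ Ap *ᵥ (A *ᵥ u) = (Aᵀ *ᵥ u) ⬝ᵥ (Ap * A) *ᵥ u := by
        rw [mulVec_mulVec, hAt]
  _ = (u ᵥ* A) ⬝ᵥ (Ap * A) *ᵥ u := by rw [mulVec_transpose]
  _ = u ⬝ᵥ (A * (Ap * A)) *ᵥ u := by
        rw [dotProduct_mulVec, vecMul_vecMul, ← dotProduct_mulVec]
  _ = u ⬝ᵥ A *ᵥ u := by rw [← Matrix.mul_assoc, h1]


lemma mulVec_col_sum {n d : ℕ} (C : Matrix (Fin n) (Fin d) ℝ) (x : Fin d → ℝ) :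
    C *ᵥ x = ∑ j, x j • (fun i => C i j) := by
  ext i
  simp [mulVec, dotProduct, Finset.sum_apply, mul_comm]

lemma mulVec_mem_range {n d : ℕ} (C : Matrix (Fin n) (Fin d) ℝ)
    (A : Matrix (Fin n) (Fin n) ℝ)
    (hran : ∀ z : Fin d → ℤ, latPt C z ∈ Set.range A.mulVec) (x : Fin d → ℝ) :
    C *ᵥ x ∈ Set.range A.mulVec := by
  have hS : Set.range A.mulVec = ↑(LinearMap.range A.mulVecLin) := by
    ext y; simp [LinearMap.mem_range, mulVecLin_apply]
  rw [hS]
  rw [mulVec_col_sum]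
  refine Submodule.sum_mem _ fun j _ => Submodule.smul_mem _ _ ?_
  have := hran (Pi.single j 1)
  rw [hS] at this
  convert this using 2
  unfold latPt
  have : (fun i => (((Pi.single j 1 : Fin d → ℤ) i : ℝ))) = Pi.single j 1 := by
    ext k
    by_cases h : k = j <;> simp [h, Pi.single_apply]
  rw [this, mulVec_single_one]
  rfl

lemma mulVec_inj {n d : ℕ} {C : Matrix (Fin n) (Fin d) ℝ}
    (hC : LinearIndependent ℝ fun j : Fin d => fun i => C i j)
    {x : Fin d → ℝ} (hx : C *ᵥ x = 0) : x = 0 := by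
  rw [mulVec_col_sum] at hx
  exact funext (Fintype.linearIndependent_iff.mp hC x hx)

lemma sphere_min {d : ℕ} [Nonempty (Fin d)] {g : (Fin d → ℝ) → ℝ}
    (hcont : Continuous g) (hhom : ∀ (r : ℝ) (x), g (r • x) = r ^ 2 * g x)
    (hpos : ∀ x, x ≠ 0 → 0 < g x) :
    ∃ c > 0, ∀ x, c * ‖x‖ ^ 2 ≤ g x := by
  have hne : (Metric.sphere (0 : Fin d → ℝ) 1).Nonempty := by
    exact NormedSpace.sphere_nonempty.mpr zero_le_one
  obtain ⟨x0, hx0mem, hmin⟩ :=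
    (isCompact_sphere (0 : Fin d → ℝ) 1).exists_isMinOn hne hcont.continuousOn
  have hx0norm : ‖x0‖ = 1 := by simpa using hx0mem
  have hx0ne : x0 ≠ 0 := by
    intro h; rw [h, norm_zero] at hx0norm; norm_num at hx0norm
  refine ⟨g x0, hpos x0 hx0ne, fun x => ?_⟩
  rcases eq_or_ne x 0 with rfl | hx
  · have : g 0 = 0 := by
      have := hhom 0 0; simpa using this
    simp [this]
  · have hxn : 0 < ‖x‖ := norm_pos_iff.mpr hx
    set u := ‖x‖⁻¹ • x with hu
    have hun : ‖u‖ = 1 := by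
      rw [hu, norm_smul, norm_inv, norm_norm, inv_mul_cancel₀ hxn.ne']
    have hmem : u ∈ Metric.sphere (0 : Fin d → ℝ) 1 := by simpa using hun
    have h1 : g x0 ≤ g u := hmin hmem
    have h2 : g x = ‖x‖ ^ 2 * g u := by
      rw [← hhom, hu, smul_smul, mul_inv_cancel₀ hxn.ne', one_smul]
    rw [h2]
    calc g x0 * ‖x‖ ^ 2 ≤ g u * ‖x‖ ^ 2 := by nlinarith
    _ = ‖x‖ ^ 2 * g u := by ring

lemma summable_int_exp {b : ℝ} (hb : 0 < b) :
    Summable fun m : ℤ => Real.exp (-b * |(m : ℝ)|) := by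
  have hnat : Summable fun k : ℕ => Real.exp (-b) ^ k :=
    summable_geometric_of_lt_one (Real.exp_nonneg _)
      (Real.exp_lt_one_iff.mpr (by linarith))
  apply Summable.of_nat_of_neg
  · refine hnat.congr fun k => ?_
    rw [← Real.exp_nat_mul]
    congr 1
    rw [Int.cast_natCast, abs_of_nonneg (by positivity)]
    ring
  · refine hnat.congr fun k => ?_
    rw [← Real.exp_nat_mul]
    congr 1
    push_cast
    rw [abs_neg, abs_of_nonneg (by positivity)]
    ring

set_option maxHeartbeats 1000000 in
lemma summable_pi_prod {d : ℕ} {h : ℤ → ℝ} (h0 : ∀ m, 0 ≤ h m) (hs : Summable h) :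
    Summable fun z : Fin d → ℤ => ∏ i, h (z i) := by
  induction d with
  | zero =>
    exact Summable.of_finite
  | succ d ih =>
    have key : Summable fun p : ℤ × (Fin d → ℤ) => h p.1 * ∏ i, h (p.2 i) := by
      apply Summable.mul_of_nonneg hs ih
      · intro p; exact h0 _
      · intro z; exact Finset.prod_nonneg fun i _ => h0 _
    have heq := (Fin.consEquiv fun _ : Fin (d + 1) => ℤ).summable_iff
      (f := fun z : Fin (d + 1) → ℤ => ∏ i, h (z i))
    rw [← heq]
    refine key.congr fun p => ?_
    simp [Fin.consEquiv, Fin.prod_univ_succ]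

lemma int_abs_sum_le {d : ℕ} (z : Fin d → ℤ) (hz : z ≠ 0) :
    ∑ i, |(z i : ℝ)| ≤ (d : ℝ) * ‖(fun i => (z i : ℝ))‖ ^ 2 := by
  set x : Fin d → ℝ := fun i => (z i : ℝ) with hx
  have h1 : 1 ≤ ‖x‖ := by
    obtain ⟨i, hi⟩ : ∃ i, z i ≠ 0 := by
      by_contra h; push_neg at h; exact hz (funext h)
    calc (1 : ℝ) ≤ |(z i : ℝ)| := by exact_mod_cast Int.one_le_abs hi
    _ = ‖x i‖ := (Real.norm_eq_abs _).symm
    _ ≤ ‖x‖ := norm_le_pi_norm x i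
  calc ∑ i, |(z i : ℝ)| ≤ ∑ _i : Fin d, ‖x‖ :=
        Finset.sum_le_sum fun i _ => (Real.norm_eq_abs (x i)) ▸ norm_le_pi_norm x i
  _ = (d : ℝ) * ‖x‖ := by simp [Finset.sum_const, Finset.card_univ, nsmul_eq_mul]
  _ ≤ (d : ℝ) * ‖x‖ ^ 2 := by nlinarith [mul_nonneg (mul_nonneg (Nat.cast_nonneg (α := ℝ) d) (norm_nonneg x)) (sub_nonneg.mpr h1)]

lemma summable_rho {n d : ℕ} (C : Matrix (Fin n) (Fin d) ℝ)
    (hC : LinearIndependent ℝ fun j : Fin d => fun i => C i j)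
    {A Ap : Matrix (Fin n) (Fin n) ℝ} (hA : A.PosSemidef) (h1 : A * Ap * A = A)
    (hran : ∀ z : Fin d → ℤ, latPt C z ∈ Set.range A.mulVec) :
    Summable fun z : {z : Fin d → ℤ // z ≠ 0} =>
      Real.exp (-π * (latPt C z.1 ⬝ᵥ Ap.mulVec (latPt C z.1))) := by
  rcases isEmpty_or_nonempty {z : Fin d → ℤ // z ≠ 0} with hE | hNE
  · exact Summable.of_finite
  obtain ⟨z0⟩ := hNE
  haveI hdne : Nonempty (Fin d) := by
    by_contra hembt
    exact z0.2 (funext fun i => absurd ⟨i⟩ hembt)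
  have hd : 0 < (d : ℝ) := by
    exact_mod_cast Fin.pos_iff_nonempty.mpr hdne
  -- the quadratic form
  have hcont : Continuous fun x : Fin d → ℝ => (C *ᵥ x) ⬝ᵥ Ap *ᵥ (C *ᵥ x) := by
    have hm : Continuous fun x : Fin d → ℝ => C *ᵥ x := by
      have := LinearMap.continuous_of_finiteDimensional (Matrix.mulVecLin C)
      exact this.congr fun x => by simp [Matrix.mulVecLin_apply]
    have hm2 : Continuous fun y : Fin n → ℝ => Ap *ᵥ y := by
      have := LinearMap.continuous_of_finiteDimensional (Matrix.mulVecLin Ap)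
      exact this.congr fun x => by simp [Matrix.mulVecLin_apply]
    have h2 : Continuous fun y : Fin n → ℝ => y ⬝ᵥ Ap *ᵥ y := by
      simp only [dotProduct]
      exact continuous_finset_sum _ fun i _ =>
        (continuous_apply i).mul ((continuous_apply i).comp hm2)
    exact h2.comp hm
  have hhom : ∀ (r : ℝ) (x : Fin d → ℝ),
      (C *ᵥ (r • x)) ⬝ᵥ Ap *ᵥ (C *ᵥ (r • x)) = r ^ 2 * ((C *ᵥ x) ⬝ᵥ Ap *ᵥ (C *ᵥ x)) := by
    intro r x
    rw [mulVec_smul, mulVec_smul, smul_dotProduct, dotProduct_smul, smul_eq_mul, smul_eq_mul]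
    ring
  have hgpos : ∀ x : Fin d → ℝ, x ≠ 0 → 0 < (C *ᵥ x) ⬝ᵥ Ap *ᵥ (C *ᵥ x) := by
    intro x hx
    obtain ⟨u, hu⟩ := mulVec_mem_range C A hran x
    have he : (C *ᵥ x) ⬝ᵥ Ap *ᵥ (C *ᵥ x) = u ⬝ᵥ A *ᵥ u := by
      rw [show C *ᵥ x = A *ᵥ u from hu.symm]
      exact quad_eq hA h1 u
    have h0 : 0 ≤ u ⬝ᵥ A *ᵥ u := by
      have := hA.dotProduct_mulVec_nonneg u
      simpa using this
    have hne : u ⬝ᵥ A *ᵥ u ≠ 0 := by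
      intro hzero
      have := (hA.dotProduct_mulVec_zero_iff u).mp (by simpa using hzero)
      rw [hu] at this
      exact hx (mulVec_inj hC this)
    rw [he]
    exact lt_of_le_of_ne h0 (Ne.symm hne)
  obtain ⟨c, hc, hcg⟩ := sphere_min hcont hhom hgpos
  set b : ℝ := π * c / d with hb_def
  have hb : 0 < b := by
    apply div_pos (mul_pos pi_pos hc) hd
  -- comparison
  have hgauss : ∀ z : {z : Fin d → ℤ // z ≠ 0},
      Real.exp (-π * (latPt C z.1 ⬝ᵥ Ap.mulVec (latPt C z.1))) ≤
        ∏ i, Real.exp (-b * |(z.1 i : ℝ)|) := by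
    intro z
    rw [← Real.exp_sum]
    apply Real.exp_le_exp.mpr
    set x : Fin d → ℝ := fun i => (z.1 i : ℝ) with hxdef
    have hsum : ∑ i, -b * |(z.1 i : ℝ)| = -(b * ∑ i, |(z.1 i : ℝ)|) := by
      rw [← Finset.mul_sum]; ring
    rw [hsum]
    have key : b * ∑ i, |(z.1 i : ℝ)| ≤ π * ((C *ᵥ x) ⬝ᵥ Ap *ᵥ (C *ᵥ x)) := by
      calc b * ∑ i, |(z.1 i : ℝ)| ≤ b * ((d : ℝ) * ‖x‖ ^ 2) :=
            mul_le_mul_of_nonneg_left (int_abs_sum_le z.1 z.2) hb.le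
      _ = π * (c * ‖x‖ ^ 2) := by
            rw [hb_def]; field_simp
      _ ≤ π * ((C *ᵥ x) ⬝ᵥ Ap *ᵥ (C *ᵥ x)) :=
            mul_le_mul_of_nonneg_left (hcg x) pi_pos.le
    have : latPt C z.1 = C *ᵥ x := rfl
    rw [this]
    linarith
  refine Summable.of_nonneg_of_le (fun z => (Real.exp_pos _).le) hgauss ?_
  exact (summable_pi_prod (fun m => (Real.exp_pos _).le) (summable_int_exp hb)).comp_injective
    Subtype.val_injective

/-- For a lattice `Λ ⊆ ran(A)` with `A ⪰ 0` and `t ≥ 1`,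
`ρ_{A/t²}(Λ \ {0}) ≤ ρ_A(Λ \ {0})^{t²}`, where `ρ_X(T) = Σ_{y∈T} exp(−π yᵀ X⁺ y)`. -/
theorem stmt1 {n d : ℕ} (C : Matrix (Fin n) (Fin d) ℝ)
    (hC : LinearIndependent ℝ fun j : Fin d => fun i => C i j)
    (A Ap Ap' : Matrix (Fin n) (Fin n) ℝ) (hA : A.PosSemidef)
    (hAp : IsMoorePenrose A Ap)
    (t : ℝ) (ht : 1 ≤ t)
    (hAp' : IsMoorePenrose ((t ^ 2)⁻¹ • A) Ap')
    (hran : ∀ z : Fin d → ℤ, latPt C z ∈ Set.range A.mulVec) :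
    (∑' z : {z : Fin d → ℤ // z ≠ 0},
        Real.exp (-π * (latPt C z.1 ⬝ᵥ Ap'.mulVec (latPt C z.1)))) ≤
      (∑' z : {z : Fin d → ℤ // z ≠ 0},
        Real.exp (-π * (latPt C z.1 ⬝ᵥ Ap.mulVec (latPt C z.1)))) ^ (t ^ 2) := by
  have hs1 : 1 ≤ t ^ 2 := by nlinarith
  have hs0 : 0 < t ^ 2 := by nlinarith
  have hApEq : Ap' = (t ^ 2) • Ap := mp_unique hAp' (mp_smul hAp hs0.ne')
  set a : {z : Fin d → ℤ // z ≠ 0} → ℝ :=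
    fun z => Real.exp (-π * (latPt C z.1 ⬝ᵥ Ap.mulVec (latPt C z.1))) with ha_def
  have hterm : ∀ z : {z : Fin d → ℤ // z ≠ 0},
      Real.exp (-π * (latPt C z.1 ⬝ᵥ Ap'.mulVec (latPt C z.1))) = a z ^ (t ^ 2) := by
    intro z
    rw [hApEq, smul_mulVec, dotProduct_smul, smul_eq_mul, ha_def, ← Real.exp_mul]
    congr 1
    ring
  rcases isEmpty_or_nonempty {z : Fin d → ℤ // z ≠ 0} with hE | hNE
  · rw [tsum_empty, tsum_empty, Real.zero_rpow hs0.ne']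
  obtain ⟨z0⟩ := hNE
  have ha : Summable a := summable_rho C hC hA hAp.1 hran
  set S : ℝ := ∑' z, a z with hS_def
  have hSz : ∀ z, a z ≤ S := fun z => Summable.le_tsum ha z fun _ _ => (Real.exp_pos _).le
  have hS_pos : 0 < S := lt_of_lt_of_le (Real.exp_pos _) (hSz z0)
  have hpow : ∀ z, a z ^ (t ^ 2) ≤ S ^ (t ^ 2 - 1) * a z := by
    intro z
    have haz : (0 : ℝ) < a z := Real.exp_pos _
    have he : a z ^ (t ^ 2) = a z ^ (t ^ 2 - 1) * a z := by
      rw [← Real.rpow_add_one haz.ne']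
      congr 1
      ring
    rw [he]
    exact mul_le_mul_of_nonneg_right
      (Real.rpow_le_rpow haz.le (hSz z) (by linarith)) haz.le
  have hsum_pow : Summable fun z => a z ^ (t ^ 2) :=
    Summable.of_nonneg_of_le (fun z => Real.rpow_nonneg (Real.exp_pos _).le _) hpow
      (ha.mul_left _)
  calc (∑' z : {z : Fin d → ℤ // z ≠ 0},
        Real.exp (-π * (latPt C z.1 ⬝ᵥ Ap'.mulVec (latPt C z.1))))
      = ∑' z, a z ^ (t ^ 2) := tsum_congr hterm
  _ ≤ ∑' z, S ^ (t ^ 2 - 1) * a z := Summable.tsum_le_tsum hpow hsum_pow (ha.mul_left _)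
  _ = S ^ (t ^ 2 - 1) * S := by rw [tsum_mul_left]
  _ = S ^ (t ^ 2) := by
      rw [← Real.rpow_add_one hS_pos.ne']
      congr 1
      ring
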